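/- The language L_cc = { x : M_cc halts on input x } satisfies L_cc ∩ { u^n 0^m h : n, m ≥ 0 } = { u^n 0^m h : n ≥ 2^m − 1 }. -/

import Mathlib

inductive Alph : Type
  | u | z | h
deriving DecidableEq

/-- The regular language { u^n 0^m h : n, m ≥ 0 } (with `Alph.z` playing the role of `0`). -/
def Lu0h : Language Alph :=
  {w | ∃ n m : ℕ, w = List.replicate n Alph.u ++ List.replicate m Alph.z ++ [Alph.h]}

/-- The language L' = { u^n 0^m h : n ≥ 2^m − 1 }. -/
def Lcc' : Language Alph :=
  {w | ∃ n m : ℕ, w = List.replicate n Alph.u ++ List.replicate m Alph.z ++ [Alph.h] ∧ 2 ^ m - 1 ≤ n}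

/-- n-fold repetition of a word. -/
def listPow {α : Type*} (l : List α) (n : ℕ) : List α := (List.replicate n l).flatten

inductive Dir : Type
  | L | R
deriving DecidableEq

def Dir.move : Dir → ℤ
  | .L => -1
  | .R => 1

/-- A one-state Turing machine: a blank symbol, a set of halting symbols
(as a Boolean predicate) and a transition function on the tape alphabet. -/
structure OneStateTM (Γ : Type) where
  blank : Γ
  halt : Γ → Bool
  δ : Γ → Γ × Dir

/-- A configuration: a bi-infinite tape and a head position. -/
structure Cfg (Γ : Type) where
  tape : ℤ → Γ
  pos : ℤ

/-- One step of the machine; `none` means the machine has halted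
(the head reads a halting symbol). -/
def OneStateTM.step {Γ : Type} (M : OneStateTM Γ) (c : Cfg Γ) : Option (Cfg Γ) :=
  if M.halt (c.tape c.pos) then none
  else some ⟨Function.update c.tape c.pos (M.δ (c.tape c.pos)).1,
             c.pos + (M.δ (c.tape c.pos)).2.move⟩

/-- Initial tape: the input written in cells 0,…,len−1, blanks elsewhere. -/
def OneStateTM.initTape {Γ : Type} (M : OneStateTM Γ) (l : List Γ) : ℤ → Γ :=
  fun i => if i < 0 then M.blank else l.getD i.toNat M.blank

/-- The machine halts starting from configuration `c`. -/
def OneStateTM.HaltsFrom {Γ : Type} (M : OneStateTM Γ) (c : Cfg Γ) : Prop :=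
  ∃ n : ℕ, (fun o => Option.bind o M.step)^[n] (some c) = none

/-- The machine halts on input `l` (head initially on the leftmost input symbol). -/
def OneStateTM.HaltsOn {Γ : Type} (M : OneStateTM Γ) (l : List Γ) : Prop :=
  M.HaltsFrom ⟨M.initTape l, 0⟩

/-- The tape alphabet of M_cc: blank, u, U, h, 0, 1, Z, C, B. -/
inductive Tcc : Type
  | blank | u | bigU | h | z0 | one | Z | C | B
deriving DecidableEq

/-- The one-state Turing machine M_cc. -/
def Mcc : OneStateTM Tcc where
  blank := .blank
  halt := fun a => match a with | .h => true | _ => false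
  δ := fun a => match a with
    | .u => (.bigU, .R)
    | .z0 => (.one, .L)
    | .bigU => (.C, .R)
    | .one => (.Z, .R)
    | .Z => (.z0, .L)
    | .C => (.B, .L)
    | .B => (.C, .R)
    | .blank => (.blank, .L)
    | .h => (.h, .R)   -- irrelevant: h is halting

/-- The input u^n 0^m h. -/
def ccInput (n m : ℕ) : List Tcc :=
  List.replicate n .u ++ List.replicate m .z0 ++ [.h]

/-- Embedding of the input alphabet {u, 0, h} into the tape alphabet of M_cc. -/
def embed : Alph → Tcc
  | .u => .u
  | .z => .z0
  | .h => .h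

/-- The language recognized (by halting) by M_cc, as a language over {u, 0, h}. -/
def Lcc : Language Alph := {x | Mcc.HaltsOn (x.map embed)}



namespace MccProof

open Tcc List

/-- abbreviation for replicate -/
abbrev Rl (n : ℕ) (a : Tcc) : List Tcc := List.replicate n a

def tapeOf (l : List Tcc) : ℤ → Tcc :=
  fun i => if i < 0 then .blank else l.getD i.toNat .blank

def cfg (L : List Tcc) (p : ℕ) : Cfg Tcc := ⟨tapeOf L, (p : ℤ)⟩

def F : Option (Cfg Tcc) → Option (Cfg Tcc) := fun o => Option.bind o Mcc.step

def Reaches (c c' : Cfg Tcc) : Prop := ∃ k, F^[k] (some c) = some c'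

lemma haltsFrom_iff (c : Cfg Tcc) : Mcc.HaltsFrom c ↔ ∃ n, F^[n] (some c) = none := Iff.rfl

lemma reaches_refl (c : Cfg Tcc) : Reaches c c := ⟨0, rfl⟩

lemma reaches_trans {a b c : Cfg Tcc} (h1 : Reaches a b) (h2 : Reaches b c) : Reaches a c := by
  obtain ⟨k1, h1⟩ := h1; obtain ⟨k2, h2⟩ := h2
  exact ⟨k2 + k1, by rw [Function.iterate_add_apply, h1, h2]⟩

lemma reaches_step {a b : Cfg Tcc} (h : Mcc.step a = some b) : Reaches a b :=
  ⟨1, by simp [F, h]⟩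

lemma F_none (k : ℕ) : F^[k] none = none := by
  induction k with
  | zero => rfl
  | succ k ih => rw [Function.iterate_succ_apply, show F none = none from rfl, ih]

lemma halts_of_reaches {a b : Cfg Tcc} (h : Reaches a b) (hb : Mcc.HaltsFrom b) :
    Mcc.HaltsFrom a := by
  obtain ⟨k, hk⟩ := h; obtain ⟨n, hn⟩ := hb
  have hn' : F^[n] (some b) = none := hn
  refine ⟨n + k, ?_⟩
  show F^[n+k] (some a) = none
  rw [Function.iterate_add_apply, hk]; exact hn'

lemma halts_of_reaches' {a b : Cfg Tcc} (h : Reaches a b) (ha : Mcc.HaltsFrom a) :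
    Mcc.HaltsFrom b := by
  obtain ⟨k, hk⟩ := h; obtain ⟨n, hn⟩ := ha
  have hn' : F^[n] (some a) = none := hn
  rcases le_or_gt k n with hle | hlt
  · refine ⟨n - k, ?_⟩
    show F^[n-k] (some b) = none
    rw [← hk, ← Function.iterate_add_apply, Nat.sub_add_cancel hle]; exact hn'
  · exfalso
    have h2 : F^[k] (some a) = none := by
      rw [← Nat.sub_add_cancel hlt.le, Function.iterate_add_apply, hn', F_none]
    rw [hk] at h2; exact Option.some_ne_none _ h2

lemma not_halts_of_reaches {a b : Cfg Tcc} (h : Reaches a b) (hb : ¬ Mcc.HaltsFrom b) :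
    ¬ Mcc.HaltsFrom a := fun ha => hb (halts_of_reaches' h ha)

/-- helper list lemmas -/
lemma getD_append_len (P : List Tcc) (a : Tcc) (t : List Tcc) :
    (P ++ a :: t).getD P.length .blank = a := by
  induction P with
  | nil => rfl
  | cons y P ih => simpa using ih

lemma set_append_len (P : List Tcc) (a x : Tcc) (t : List Tcc) :
    (P ++ a :: t).set P.length x = P ++ x :: t := by
  induction P with
  | nil => rfl
  | cons y P ih => simp [ih]

lemma tapeOf_nat (L : List Tcc) (p : ℕ) : tapeOf L (p : ℤ) = L.getD p .blank := by
  simp [tapeOf]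

lemma update_tapeOf (L : List Tcc) (p : ℕ) (x : Tcc) (hp : p < L.length) :
    Function.update (tapeOf L) (p : ℤ) x = tapeOf (L.set p x) := by
  funext i
  rcases eq_or_ne i (p : ℤ) with rfl | hne
  · rw [Function.update_self, tapeOf_nat, List.getD_eq_getElem _ _ (by simpa using hp),
      List.getElem_set_self]
  · rw [Function.update_of_ne hne]
    unfold tapeOf
    rcases lt_or_ge i 0 with hi | hi
    · simp [hi]
    · have hip : i.toNat ≠ p := by omega
      simp only [not_lt.mpr hi, if_neg (not_lt.mpr hi)]
      rcases lt_or_ge i.toNat L.length with hlt | hge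
      · rw [List.getD_eq_getElem _ _ hlt, List.getD_eq_getElem _ _ (by simpa using hlt),
          List.getElem_set_ne (by omega)]
      · rw [List.getD_eq_default _ _ hge, List.getD_eq_default _ _ (by simpa using hge)]

/-- step lemmas -/
lemma step_right {L : List Tcc} {p : ℕ} {s x : Tcc}
    (hp : p < L.length) (hs : L.getD p .blank = s)
    (hh : Mcc.halt s = false) (hd : Mcc.δ s = (x, .R)) :
    Mcc.step (cfg L p) = some (cfg (L.set p x) (p + 1)) := by
  unfold OneStateTM.step cfg
  simp only [tapeOf_nat, hs, hh, Bool.false_eq_true, if_false, hd]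
  rw [update_tapeOf L p x hp]
  congr 2

lemma step_left {L : List Tcc} {p : ℕ} {s x : Tcc}
    (hp : p < L.length) (hs : L.getD p .blank = s)
    (hh : Mcc.halt s = false) (hd : Mcc.δ s = (x, .L)) :
    Mcc.step (cfg L p) = some ⟨tapeOf (L.set p x), (p : ℤ) - 1⟩ := by
  unfold OneStateTM.step cfg
  simp only [tapeOf_nat, hs, hh, Bool.false_eq_true, if_false, hd]
  rw [update_tapeOf L p x hp]
  congr 2

lemma step_left' {L : List Tcc} {p : ℕ} {s x : Tcc}
    (hp : p + 1 < L.length) (hs : L.getD (p+1) .blank = s)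
    (hh : Mcc.halt s = false) (hd : Mcc.δ s = (x, .L)) :
    Mcc.step (cfg L (p+1)) = some (cfg (L.set (p+1) x) p) := by
  rw [step_left hp hs hh hd]
  congr 1
  unfold cfg
  congr 1
  push_cast; ring

/-- right sweep -/
lemma sweepR {s s' : Tcc} (hh : Mcc.halt s = false) (hd : Mcc.δ s = (s', .R)) :
    ∀ (j : ℕ) (Q rest : List Tcc),
      Reaches (cfg (Q ++ Rl j s ++ rest) Q.length)
        (cfg (Q ++ Rl j s' ++ rest) (Q.length + j)) := by
  intro j
  induction j with
  | zero => intro Q rest; simpa using reaches_refl _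
  | succ j ih =>
    intro Q rest
    have h1 : Q ++ Rl (j+1) s ++ rest = Q ++ s :: (Rl j s ++ rest) := by
      simp [Rl, List.replicate_succ]
    have hstep : Mcc.step (cfg (Q ++ s :: (Rl j s ++ rest)) Q.length)
        = some (cfg (Q ++ s' :: (Rl j s ++ rest)) (Q.length + 1)) := by
      rw [← set_append_len Q s s' (Rl j s ++ rest)]
      exact step_right (by simp) (getD_append_len _ _ _) hh hd
    have h2 : Q ++ s' :: (Rl j s ++ rest) = (Q ++ [s']) ++ Rl j s ++ rest := by simp
    have h3 := ih (Q ++ [s']) rest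
    rw [h1]
    refine reaches_trans (reaches_step hstep) ?_
    rw [h2]
    have h4 : (Q ++ [s']).length = Q.length + 1 := by simp
    rw [h4] at h3
    have h5 : (Q ++ [s']) ++ Rl j s' ++ rest = Q ++ Rl (j+1) s' ++ rest := by
      simp [Rl, List.replicate_succ]
    rw [h5] at h3
    have h6 : Q.length + 1 + j = Q.length + (j+1) := by ring
    rwa [h6] at h3

/-- left sweep, landing on the cell `a` just left of the block -/
lemma sweepL {s s' : Tcc} (hh : Mcc.halt s = false) (hd : Mcc.δ s = (s', .L)) :
    ∀ (j : ℕ) (Q : List Tcc) (a : Tcc) (rest : List Tcc),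
      Reaches (cfg (Q ++ a :: (Rl j s ++ rest)) (Q.length + j))
        (cfg (Q ++ a :: (Rl j s' ++ rest)) Q.length) := by
  intro j
  induction j with
  | zero => intro Q a rest; simpa using reaches_refl _
  | succ j ih =>
    intro Q a rest
    have h1 : Q ++ a :: (Rl (j+1) s ++ rest) = (Q ++ a :: Rl j s) ++ s :: rest := by
      simp [Rl, List.replicate_succ' (n := j)]
    have hlen : (Q ++ a :: Rl j s).length = Q.length + j + 1 := by simp [Rl]; ring
    have hstep : Mcc.step (cfg ((Q ++ a :: Rl j s) ++ s :: rest) (Q.length + j + 1))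
        = some (cfg ((Q ++ a :: Rl j s) ++ s' :: rest) (Q.length + j)) := by
      have := step_left' (L := (Q ++ a :: Rl j s) ++ s :: rest) (p := Q.length + j)
        (s := s) (x := s') (by simp [Rl]; omega) (by rw [← hlen]; exact getD_append_len _ _ _) hh hd
      rw [← hlen] at this ⊢
      rw [this, set_append_len]
    have h2 : (Q ++ a :: Rl j s) ++ s' :: rest = Q ++ a :: (Rl j s ++ s' :: rest) := by simp
    have h3 := ih Q a (s' :: rest)
    have h4 : Rl j s' ++ s' :: rest = Rl (j+1) s' ++ rest := by
      simp [Rl, List.replicate_succ' (n := j)]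
    rw [h4] at h3
    have : Q.length + (j+1) = Q.length + j + 1 := by ring
    rw [h1, this]
    exact reaches_trans (reaches_step hstep) (h2 ▸ h3)

/-- falling off the left edge -/
lemma LFall : ∀ (j : ℕ) (rest : List Tcc),
    Reaches ⟨tapeOf (Rl j .C ++ rest), (j : ℤ) - 1⟩ ⟨tapeOf (Rl j .B ++ rest), -1⟩ := by
  intro j
  induction j with
  | zero => intro rest; simpa using reaches_refl _
  | succ j ih =>
    intro rest
    have h1 : Rl (j+1) Tcc.C ++ rest = Rl j .C ++ .C :: rest := by
      simp [Rl, List.replicate_succ' (n := j)]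
    have hget : (Rl j Tcc.C ++ .C :: rest).getD j .blank = .C := by
      have := getD_append_len (Rl j .C) .C rest; simpa [Rl] using this
    have hset : (Rl j Tcc.C ++ .C :: rest).set j .B = Rl j .C ++ .B :: rest := by
      have := set_append_len (Rl j .C) .C .B rest; simpa [Rl] using this
    have hstep : Mcc.step (cfg (Rl j .C ++ .C :: rest) j)
        = some ⟨tapeOf (Rl j .C ++ .B :: rest), (j : ℤ) - 1⟩ := by
      rw [step_left (by simp [Rl]) hget rfl rfl, hset]
    have hc : (⟨tapeOf (Rl (j+1) .C ++ rest), ((j+1 : ℕ) : ℤ) - 1⟩ : Cfg Tcc)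
        = cfg (Rl j .C ++ .C :: rest) j := by
      unfold cfg; rw [h1]; congr 1; push_cast; ring
    rw [hc]
    refine reaches_trans (reaches_step hstep) ?_
    have h2 := ih (.B :: rest)
    have h3 : Rl j Tcc.B ++ Tcc.B :: rest = Rl (j+1) .B ++ rest := by
      simp [Rl, List.replicate_succ' (n := j)]
    rwa [h3] at h2

lemma drift (L : List Tcc) (p : ℤ) (hp : p < 0) :
    ∀ k : ℕ, F^[k] (some ⟨tapeOf L, p⟩) = some ⟨tapeOf L, p - k⟩ := by
  intro k
  induction k with
  | zero => simp
  | succ k ih =>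
    rw [Function.iterate_succ_apply', ih]
    show Mcc.step ⟨tapeOf L, p - k⟩ = some ⟨tapeOf L, p - (k+1)⟩
    have hb : tapeOf L (p - k) = .blank := by
      simp [tapeOf, show p - (k:ℤ) < 0 by omega]
    unfold OneStateTM.step
    dsimp only
    simp only [hb]
    simp only [show Mcc.halt .blank = false from rfl, Bool.false_eq_true, if_false,
      show Mcc.δ .blank = (.blank, .L) from rfl]
    have hupd : Function.update (tapeOf L) (p - (k:ℤ)) Tcc.blank = tapeOf L := by
      funext i
      rcases eq_or_ne i (p - (k:ℤ)) with rfl | hne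
      · rw [Function.update_self, hb]
      · rw [Function.update_of_ne hne]
    rw [hupd]
    have e : p - (k:ℤ) + Dir.L.move = p - ((k+1 : ℕ) : ℤ) := by
      show p - (k:ℤ) + (-1) = _
      push_cast; ring
    rw [e]
    norm_num

lemma not_halts_neg (L : List Tcc) (p : ℤ) (hp : p < 0) :
    ¬ Mcc.HaltsFrom ⟨tapeOf L, p⟩ := by
  rintro ⟨n, hn⟩
  have h2 : F^[n] (some ⟨tapeOf L, p⟩) = none := hn
  rw [drift L p hp n] at h2
  exact Option.some_ne_none _ h2

lemma halts_on_h {L : List Tcc} {p : ℕ} (hs : L.getD p .blank = .h) :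
    Mcc.HaltsFrom (cfg L p) := by
  refine ⟨1, ?_⟩
  show F (some (cfg L p)) = none
  show Mcc.step (cfg L p) = none
  unfold OneStateTM.step cfg
  dsimp only
  simp only [tapeOf_nat, hs]
  rfl

/-- binary counter, LSB first -/
def ctr : ℕ → ℕ → List Bool
  | 0, _ => []
  | m+1, k => (decide (k % 2 = 1)) :: ctr m (k/2)

def wb (w : List Bool) : List Tcc := w.map (fun b => if b then .one else .z0)

lemma wb_false_rep (t : ℕ) : wb (List.replicate t false) = Rl t .z0 := by simp [wb, Rl]

lemma ctr_zero (m : ℕ) : ctr m 0 = List.replicate m false := by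
  induction m with
  | zero => rfl
  | succ m ih => simp [ctr, ih, List.replicate_succ]

lemma ctr_top (m : ℕ) : ctr m (2^m - 1) = List.replicate m true := by
  induction m with
  | zero => rfl
  | succ m ih =>
    have h1 : 2^(m+1) = 2 * 2^m := by ring
    have h2 : 0 < 2^m := Nat.pow_pos (by norm_num)
    have hmod : (2^(m+1) - 1) % 2 = 1 := by omega
    have hdiv : (2^(m+1) - 1) / 2 = 2^m - 1 := by omega
    simp [ctr, hmod, hdiv, ih, List.replicate_succ]

lemma ctr_decomp (m : ℕ) : ∀ k, k < 2^m - 1 →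
    ∃ t w', ctr m k = List.replicate t true ++ false :: w' ∧
      ctr m (k+1) = List.replicate t false ++ true :: w' := by
  induction m with
  | zero => intro k hk; simp at hk
  | succ m ih =>
    intro k hk
    have h1 : 2^(m+1) = 2 * 2^m := by ring
    have h2 : 0 < 2^m := Nat.pow_pos (by norm_num)
    rcases Nat.even_or_odd k with he | ho
    · obtain ⟨j, hj⟩ := he
      refine ⟨0, ctr m (k/2), ?_, ?_⟩
      · have hmod : k % 2 = 0 := by omega
        simp [ctr, hmod]
      · have hmod : (k+1) % 2 = 1 := by omega
        have hdiv : (k+1)/2 = k/2 := by omega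
        simp [ctr, hmod, hdiv]
    · obtain ⟨j, hj⟩ := ho
      have hlt : k/2 < 2^m - 1 := by omega
      obtain ⟨t, w', hw, hw'⟩ := ih (k/2) hlt
      refine ⟨t+1, w', ?_, ?_⟩
      · have hmod : k % 2 = 1 := by omega
        simp [ctr, hmod, hw, List.replicate_succ]
      · have hmod : (k+1) % 2 = 0 := by omega
        have hdiv : (k+1)/2 = k/2 + 1 := by omega
        simp [ctr, hmod, hdiv, hw', List.replicate_succ]

/-- one increment of the counter -/
lemma incStep (Q : List Tcc) (a : Tcc) (t : ℕ) (w' : List Bool) (rest : List Tcc) :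
    Reaches
      (cfg (Q ++ a :: (wb (List.replicate t true ++ false :: w') ++ rest)) (Q.length + 1))
      (cfg (Q ++ a :: (wb (List.replicate t false ++ true :: w') ++ rest)) Q.length) := by
  have hw1 : wb (List.replicate t true ++ false :: w') = Rl t .one ++ .z0 :: wb w' := by
    simp [wb, Rl]
  have hw2 : wb (List.replicate t false ++ true :: w') = Rl t .z0 ++ .one :: wb w' := by
    simp [wb, Rl]
  rw [hw1, hw2]
  -- phase 1: sweep right over the ones
  have h1 := sweepR (s := .one) (s' := .Z) rfl rfl t (Q ++ [a]) (.z0 :: (wb w' ++ rest))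
  have e1 : (Q ++ [a]) ++ Rl t .one ++ (.z0 :: (wb w' ++ rest))
      = Q ++ a :: ((Rl t .one ++ .z0 :: wb w') ++ rest) := by simp
  have e2 : (Q ++ [a]) ++ Rl t .Z ++ (.z0 :: (wb w' ++ rest))
      = (Q ++ a :: Rl t .Z) ++ .z0 :: (wb w' ++ rest) := by simp
  have e3 : (Q ++ [a]).length = Q.length + 1 := by simp
  rw [e1, e2, e3] at h1
  refine reaches_trans h1 ?_
  -- phase 2: write the one
  have hlen : (Q ++ a :: Rl t .Z).length = Q.length + t + 1 := by simp [Rl]; ring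
  have epos : Q.length + 1 + t = (Q.length + t) + 1 := by omega
  rw [epos]
  have hget : ((Q ++ a :: Rl t .Z) ++ .z0 :: (wb w' ++ rest)).getD ((Q.length + t) + 1) .blank
      = .z0 := by
    have h := getD_append_len (Q ++ a :: Rl t .Z) .z0 (wb w' ++ rest)
    rwa [hlen] at h
  have hset : ((Q ++ a :: Rl t .Z) ++ .z0 :: (wb w' ++ rest)).set ((Q.length + t) + 1) .one
      = (Q ++ a :: Rl t .Z) ++ .one :: (wb w' ++ rest) := by
    have h := set_append_len (Q ++ a :: Rl t .Z) .z0 .one (wb w' ++ rest)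
    rwa [hlen] at h
  have h2 : Mcc.step (cfg ((Q ++ a :: Rl t .Z) ++ .z0 :: (wb w' ++ rest)) ((Q.length + t) + 1))
      = some (cfg ((Q ++ a :: Rl t .Z) ++ .one :: (wb w' ++ rest)) (Q.length + t)) := by
    rw [step_left' (by simp [Rl]; omega) hget rfl rfl, hset]
  refine reaches_trans (reaches_step h2) ?_
  have h3 := sweepL (s := .Z) (s' := .z0) rfl rfl t Q a (.one :: (wb w' ++ rest))
  have e4 : (Q ++ a :: Rl t .Z) ++ .one :: (wb w' ++ rest)
      = Q ++ a :: (Rl t .Z ++ .one :: (wb w' ++ rest)) := by simp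
  have e5 : Q ++ a :: (Rl t .z0 ++ .one :: (wb w' ++ rest))
      = Q ++ a :: ((Rl t .z0 ++ .one :: wb w') ++ rest) := by simp
  rw [e4]
  rw [e5] at h3
  exact h3
/-- consume one U from the zone -/
lemma bounce (s j : ℕ) (rest : List Tcc) :
    Reaches (cfg (Rl (s+1) .bigU ++ Rl j .C ++ rest) (s + j))
      (cfg (Rl s .bigU ++ Rl (j+1) .C ++ rest) (s + j + 1)) := by
  have e0 : (Rl s Tcc.bigU).length = s := by simp [Rl]
  have h1 := sweepL (s := .C) (s' := .B) rfl rfl j (Rl s .bigU) .bigU rest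
  have e1 : Rl s Tcc.bigU ++ .bigU :: (Rl j .C ++ rest) = Rl (s+1) .bigU ++ Rl j .C ++ rest := by
    simp [Rl, List.replicate_succ' (n := s)]
  rw [e1, e0] at h1
  refine reaches_trans h1 ?_
  have hget : (Rl s Tcc.bigU ++ .bigU :: (Rl j .B ++ rest)).getD s .blank = .bigU := by
    have h := getD_append_len (Rl s .bigU) .bigU (Rl j .B ++ rest); rwa [e0] at h
  have hset : (Rl s Tcc.bigU ++ .bigU :: (Rl j .B ++ rest)).set s .C
      = Rl s .bigU ++ .C :: (Rl j .B ++ rest) := by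
    have h := set_append_len (Rl s .bigU) .bigU .C (Rl j .B ++ rest); rwa [e0] at h
  have h2 : Mcc.step (cfg (Rl s .bigU ++ .bigU :: (Rl j .B ++ rest)) s)
      = some (cfg (Rl s .bigU ++ .C :: (Rl j .B ++ rest)) (s+1)) := by
    rw [step_right (by simp [Rl]) hget rfl rfl, hset]
  refine reaches_trans (reaches_step h2) ?_
  have h3 := sweepR (s := .B) (s' := .C) rfl rfl j (Rl s .bigU ++ [Tcc.C]) rest
  have e2 : (Rl s Tcc.bigU ++ [Tcc.C]) ++ Rl j .B ++ rest
      = Rl s .bigU ++ .C :: (Rl j .B ++ rest) := by simp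
  have e3 : (Rl s Tcc.bigU ++ [Tcc.C]) ++ Rl j .C ++ rest
      = Rl s .bigU ++ Rl (j+1) .C ++ rest := by
    simp [Rl, List.replicate_succ]
  have e4 : (Rl s Tcc.bigU ++ [Tcc.C]).length = s + 1 := by simp [Rl]
  rw [e2, e3, e4] at h3
  have e5 : s + 1 + j = s + j + 1 := by omega
  rwa [e5] at h3


lemma cfg_congr {L L' : List Tcc} {p p' : ℕ} (hL : L = L') (hp : p = p') :
    cfg L p = cfg L' p' := by rw [hL, hp]

lemma cfg_eq' (L L' : List Tcc) (p : ℕ) (q : ℤ) (hL : L = L') (hq : (p:ℤ) = q) :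
    cfg L p = ⟨tapeOf L', q⟩ := by rw [← hL, ← hq]; rfl

lemma zone_decomp (s k : ℕ) :
    ∃ Q a, Rl (s+1) Tcc.bigU ++ Rl k .C = Q ++ [a] ∧ Q.length = s + k := by
  cases k with
  | zero =>
    exact ⟨Rl s .bigU, .bigU, by simp [Rl, List.replicate_succ' (n := s)], by simp [Rl]⟩
  | succ j =>
    refine ⟨Rl (s+1) .bigU ++ Rl j .C, .C, ?_, ?_⟩
    · simp [Rl, List.replicate_succ' (n := j)]
    · simp [Rl]; ring

lemma loop (n m : ℕ) : ∀ k, k ≤ n → k ≤ 2^m - 1 →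
    Reaches (cfg (Rl n .u ++ (Rl m .z0 ++ [Tcc.h])) 0)
      (cfg (Rl (n-k) .bigU ++ Rl k .C ++ (wb (ctr m k) ++ [Tcc.h])) n) := by
  intro k
  induction k with
  | zero =>
    intro _ _
    have h1 := sweepR (s := .u) (s' := .bigU) rfl rfl n ([] : List Tcc) (Rl m .z0 ++ [Tcc.h])
    simp only [List.nil_append, List.length_nil, Nat.zero_add] at h1
    have e1 : Rl (n-0) Tcc.bigU ++ Rl 0 .C ++ (wb (ctr m 0) ++ [Tcc.h])
        = Rl n .bigU ++ (Rl m .z0 ++ [Tcc.h]) := by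
      simp [Rl, ctr_zero, wb_false_rep]
    rw [e1]
    exact h1
  | succ k ih =>
    intro h1 h2
    refine reaches_trans (ih (by omega) (by omega)) ?_
    obtain ⟨t, w', hw, hw'⟩ := ctr_decomp m k (by omega)
    have hsk : n - k = (n - (k+1)) + 1 := by omega
    obtain ⟨Q, a, hQ, hQl⟩ := zone_decomp (n - (k+1)) k
    have h3 := incStep Q a t w' [Tcc.h]
    rw [← hw, ← hw'] at h3
    have e2 : Rl (n-k) Tcc.bigU ++ Rl k .C ++ (wb (ctr m k) ++ [Tcc.h])
        = Q ++ a :: (wb (ctr m k) ++ [Tcc.h]) := by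
      rw [hsk, hQ]; simp
    rw [cfg_congr e2 (show n = Q.length + 1 by omega)]
    refine reaches_trans h3 ?_
    have e3 : Q ++ a :: (wb (ctr m (k+1)) ++ [Tcc.h])
        = Rl ((n-(k+1))+1) Tcc.bigU ++ Rl k .C ++ (wb (ctr m (k+1)) ++ [Tcc.h]) := by
      rw [hQ]; simp
    rw [cfg_congr e3 (show Q.length = n - (k+1) + k by omega)]
    have h4 := bounce (n - (k+1)) k (wb (ctr m (k+1)) ++ [Tcc.h])
    rw [cfg_congr (L := Rl (n-(k+1)) Tcc.bigU ++ Rl (k+1) .C ++ (wb (ctr m (k+1)) ++ [Tcc.h]))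
      rfl (show n - (k+1) + k + 1 = n by omega)] at h4
    exact h4

lemma halts_main (n m : ℕ) (h : 2^m - 1 ≤ n) :
    Mcc.HaltsFrom (cfg (Rl n .u ++ (Rl m .z0 ++ [Tcc.h])) 0) := by
  set K := 2^m - 1 with hK
  have h1 := loop n m K h (le_refl _)
  have h2 := sweepR (s := .one) (s' := .Z) rfl rfl m (Rl (n-K) .bigU ++ Rl K .C) [Tcc.h]
  have e0 : (Rl (n-K) Tcc.bigU ++ Rl K .C).length = n := by simp [Rl]; omega
  have e1 : wb (ctr m K) = Rl m .one := by
    rw [hK, ctr_top]; simp [wb, Rl]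
  rw [e0] at h2
  rw [e1] at h1
  have e2 : Rl (n-K) Tcc.bigU ++ Rl K .C ++ (Rl m .one ++ [Tcc.h])
      = Rl (n-K) Tcc.bigU ++ Rl K .C ++ Rl m .one ++ [Tcc.h] := by simp
  rw [e2] at h1
  refine halts_of_reaches (reaches_trans h1 h2) ?_
  apply halts_on_h
  have h3 := getD_append_len ((Rl (n-K) Tcc.bigU ++ Rl K .C) ++ Rl m .Z) .h ([] : List Tcc)
  have e3 : ((Rl (n-K) Tcc.bigU ++ Rl K .C) ++ Rl m .Z).length = n + m := by simp [Rl]; omega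
  rw [e3] at h3
  simpa using h3

lemma nonhalt_main (n m : ℕ) (h : n < 2^m - 1) :
    ¬ Mcc.HaltsFrom (cfg (Rl n .u ++ (Rl m .z0 ++ [Tcc.h])) 0) := by
  have h1 := loop n m n (le_refl _) (by omega)
  have e1 : Rl (n-n) Tcc.bigU ++ Rl n .C ++ (wb (ctr m n) ++ [Tcc.h])
      = Rl n .C ++ (wb (ctr m n) ++ [Tcc.h]) := by simp [Rl]
  rw [e1] at h1
  refine not_halts_of_reaches h1 ?_
  cases n with
  | zero =>
    -- head on the first 0; one step goes to position -1
    obtain ⟨m', rfl⟩ : ∃ m', m = m' + 1 := by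
      cases m with
      | zero => simp at h
      | succ m' => exact ⟨m', rfl⟩
    have e2 : Rl 0 Tcc.C ++ (wb (ctr (m'+1) 0) ++ [Tcc.h])
        = Tcc.z0 :: (Rl m' .z0 ++ [Tcc.h]) := by
      simp [Rl, ctr_zero, wb, List.replicate_succ]
    rw [e2]
    have hstep : Mcc.step (cfg (Tcc.z0 :: (Rl m' .z0 ++ [Tcc.h])) 0)
        = some ⟨tapeOf ((Tcc.z0 :: (Rl m' .z0 ++ [Tcc.h])).set 0 .one), (0:ℤ) - 1⟩ :=
      step_left (by simp) rfl rfl rfl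
    refine not_halts_of_reaches (reaches_step hstep) ?_
    exact not_halts_neg _ _ (by norm_num)
  | succ s =>
    obtain ⟨t, w', hw, hw'⟩ := ctr_decomp m (s+1) h
    have h3 := incStep (Rl s .C) .C t w' [Tcc.h]
    rw [← hw, ← hw'] at h3
    have e3 : Rl (s+1) Tcc.C ++ (wb (ctr m (s+1)) ++ [Tcc.h])
        = Rl s .C ++ .C :: (wb (ctr m (s+1)) ++ [Tcc.h]) := by
      simp [Rl, List.replicate_succ' (n := s)]
    rw [cfg_congr e3 (show s + 1 = (Rl s Tcc.C).length + 1 by simp [Rl])]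
    refine not_halts_of_reaches h3 ?_
    have e6 : cfg (Rl s Tcc.C ++ .C :: (wb (ctr m (s+1+1)) ++ [Tcc.h])) (Rl s Tcc.C).length
        = ⟨tapeOf (Rl (s+1) .C ++ (wb (ctr m (s+1+1)) ++ [Tcc.h])), ((s+1 : ℕ) : ℤ) - 1⟩ := by
      refine cfg_eq' _ _ _ _ ?_ ?_
      · simp [Rl, List.replicate_succ' (n := s)]
      · simp [Rl]
    rw [e6]
    refine not_halts_of_reaches (LFall (s+1) (wb (ctr m (s+1+1)) ++ [Tcc.h])) ?_
    exact not_halts_neg _ _ (by norm_num)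


lemma haltsOn_iff (n m : ℕ) : Mcc.HaltsOn (ccInput n m) ↔ 2^m - 1 ≤ n := by
  have hinit : (⟨Mcc.initTape (ccInput n m), 0⟩ : Cfg Tcc)
      = cfg (Rl n .u ++ (Rl m .z0 ++ [Tcc.h])) 0 := by
    unfold cfg
    congr 1
    funext i
    simp [OneStateTM.initTape, tapeOf, Mcc, ccInput, Rl]
  constructor
  · intro hH
    by_contra hn
    push_neg at hn
    exact nonhalt_main n m hn (hinit ▸ hH)
  · intro hn
    show Mcc.HaltsFrom _
    rw [hinit]
    exact halts_main n m hn

end MccProof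

/-- L_cc ⊓ { u^n 0^m h } = { u^n 0^m h : n ≥ 2^m − 1 }. -/
theorem Lcc_inter_Lu0h : Lcc ⊓ Lu0h = Lcc' := by
  ext w
  constructor
  · rintro ⟨hL, n, m, rfl⟩
    refine ⟨n, m, rfl, ?_⟩
    have hmap : (List.replicate n Alph.u ++ List.replicate m Alph.z ++ [Alph.h]).map embed
        = ccInput n m := by
      simp [ccInput, embed]
    have : Mcc.HaltsOn (ccInput n m) := by rw [← hmap]; exact hL
    exact (MccProof.haltsOn_iff n m).mp this
  · rintro ⟨n, m, rfl, hn⟩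
    have hmap : (List.replicate n Alph.u ++ List.replicate m Alph.z ++ [Alph.h]).map embed
        = ccInput n m := by
      simp [ccInput, embed]
    refine ⟨?_, n, m, rfl⟩
    show Mcc.HaltsOn _
    rw [hmap]
    exact (MccProof.haltsOn_iff n m).mpr hn
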